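/- Let G be a connected finite planar quadrangulation with boundary (all bounded faces are quadrilaterals), let V, E, F, T denote its sets of vertices, edges, internal faces, and train tracks, and let E_ext be the edges adjacent to the external face. If no train track is a loop, then |T| + 1 = |V| − |F|. -/

import Mathlib

open Finset

/-- Combinatorial data of a finite bipartite quadrangulation with boundary:
vertices `V`, internal faces `F`, each face having black vertices `x f, y f` and
white vertices `u f, v f`, in cyclic order `x f, u f, y f, v f`. -/
structure QuadData (V F : Type*) where
  x : F → V
  y : F → V
  u : F → V
  v : F → V
  /-- a bipartite coloring of the vertices -/
  color : V → Bool
  colx : ∀ f, color (x f) = true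
  coly : ∀ f, color (y f) = true
  colu : ∀ f, color (u f) = false
  colv : ∀ f, color (v f) = false
  xy : ∀ f, x f ≠ y f
  uv : ∀ f, u f ≠ v f

namespace QuadData

variable {V F : Type*} [Fintype V] [DecidableEq V] [Fintype F] [DecidableEq F]
variable (Q : QuadData V F)

/-- The four sides of a face. -/
def sides (f : F) : Finset (Sym2 V) :=
  {s(Q.x f, Q.u f), s(Q.u f, Q.y f), s(Q.y f, Q.v f), s(Q.v f, Q.x f)}

/-- The edge set: all sides of internal faces. -/
def edgeSet : Finset (Sym2 V) := Finset.univ.biUnion Q.sides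

/-- The number of internal faces adjacent to an edge. -/
def faceCount (e : Sym2 V) : ℕ := (Finset.univ.filter (fun f => e ∈ Q.sides f)).card

/-- The underlying simple graph. -/
def graph : SimpleGraph V := SimpleGraph.fromRel (fun a b => s(a, b) ∈ Q.edgeSet)

/-- Proper quadrangulation with boundary: every edge borders at most two internal
faces, the graph is connected, and Euler's formula (planarity) holds. -/
structure IsProper : Prop where
  edge_le_two : ∀ e ∈ Q.edgeSet, Q.faceCount e ≤ 2
  connected : Q.graph.Connected
  euler : (Fintype.card V : ℤ) - (Q.edgeSet.card : ℤ) + (Fintype.card F : ℤ) = 1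

/-- Two edges are opposite in a face: a train track entering a face through one
of them exits through the other. -/
def Opp (e e' : Sym2 V) : Prop :=
  ∃ f : F, (e = s(Q.x f, Q.u f) ∧ e' = s(Q.y f, Q.v f)) ∨
    (e = s(Q.y f, Q.v f) ∧ e' = s(Q.x f, Q.u f)) ∨
    (e = s(Q.u f, Q.y f) ∧ e' = s(Q.v f, Q.x f)) ∨
    (e = s(Q.v f, Q.x f) ∧ e' = s(Q.u f, Q.y f))

/-- The setoid on edges generated by the opposite-edge relation; its classes are
the train tracks. -/
def trackSetoid : Setoid {e : Sym2 V // e ∈ Q.edgeSet} :=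
  Relation.EqvGen.setoid (fun e e' => Q.Opp e.1 e'.1)

/-- The set of train tracks of the quadrangulation. -/
def Tracks : Type _ := Quotient Q.trackSetoid

/-- No train track is a loop: every train track reaches the boundary, i.e.
contains an edge adjacent to exactly one internal face. -/
def NoLoopTrack : Prop :=
  ∀ e : {e : Sym2 V // e ∈ Q.edgeSet}, ∃ e' : {e : Sym2 V // e ∈ Q.edgeSet},
    Q.trackSetoid.r e e' ∧ Q.faceCount e'.1 = 1

end QuadData
set_option linter.unusedSectionVars false

namespace QuadData

variable {V F : Type*} [Fintype V] [DecidableEq V] [Fintype F] [DecidableEq F]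
variable (Q : QuadData V F)

lemma ne_bw {a b : V} (ha : Q.color a = true) (hb : Q.color b = false) : a ≠ b := by
  intro h; rw [h, hb] at ha; exact Bool.noConfusion ha

lemma sAB (f : F) : s(Q.x f, Q.u f) ≠ s(Q.u f, Q.y f) := by
  intro h; rw [Sym2.eq_iff] at h; rcases h with ⟨h1, h2⟩ | ⟨h1, h2⟩
  · exact Q.ne_bw (Q.colx f) (Q.colu f) h1
  · exact Q.xy f h1

lemma sAC (f : F) : s(Q.x f, Q.u f) ≠ s(Q.y f, Q.v f) := by
  intro h; rw [Sym2.eq_iff] at h; rcases h with ⟨h1, h2⟩ | ⟨h1, h2⟩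
  · exact Q.xy f h1
  · exact Q.ne_bw (Q.colx f) (Q.colv f) h1

lemma sAD (f : F) : s(Q.x f, Q.u f) ≠ s(Q.v f, Q.x f) := by
  intro h; rw [Sym2.eq_iff] at h; rcases h with ⟨h1, h2⟩ | ⟨h1, h2⟩
  · exact Q.ne_bw (Q.colx f) (Q.colv f) h1
  · exact Q.uv f h2

lemma sBC (f : F) : s(Q.u f, Q.y f) ≠ s(Q.y f, Q.v f) := by
  intro h; rw [Sym2.eq_iff] at h; rcases h with ⟨h1, h2⟩ | ⟨h1, h2⟩
  · exact Q.ne_bw (Q.coly f) (Q.colu f) h1.symm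
  · exact Q.uv f h1

lemma sBD (f : F) : s(Q.u f, Q.y f) ≠ s(Q.v f, Q.x f) := by
  intro h; rw [Sym2.eq_iff] at h; rcases h with ⟨h1, h2⟩ | ⟨h1, h2⟩
  · exact Q.uv f h1
  · exact Q.ne_bw (Q.coly f) (Q.colv f) h2

lemma sCD (f : F) : s(Q.y f, Q.v f) ≠ s(Q.v f, Q.x f) := by
  intro h; rw [Sym2.eq_iff] at h; rcases h with ⟨h1, h2⟩ | ⟨h1, h2⟩
  · exact Q.ne_bw (Q.coly f) (Q.colv f) h1
  · exact Q.xy f h1.symm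

/-- The opposite edge within a face. -/
def oppEdge (f : F) (e : Sym2 V) : Sym2 V :=
  if e = s(Q.x f, Q.u f) then s(Q.y f, Q.v f)
  else if e = s(Q.y f, Q.v f) then s(Q.x f, Q.u f)
  else if e = s(Q.u f, Q.y f) then s(Q.v f, Q.x f)
  else s(Q.u f, Q.y f)

lemma mem_sides_iff {f : F} {e : Sym2 V} :
    e ∈ Q.sides f ↔ e = s(Q.x f, Q.u f) ∨ e = s(Q.u f, Q.y f) ∨
      e = s(Q.y f, Q.v f) ∨ e = s(Q.v f, Q.x f) := by
  simp [sides]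

lemma oppEdge_A (f : F) : Q.oppEdge f s(Q.x f, Q.u f) = s(Q.y f, Q.v f) := by
  rw [oppEdge, if_pos rfl]

lemma oppEdge_C (f : F) : Q.oppEdge f s(Q.y f, Q.v f) = s(Q.x f, Q.u f) := by
  rw [oppEdge, if_neg (Q.sAC f).symm, if_pos rfl]

lemma oppEdge_B (f : F) : Q.oppEdge f s(Q.u f, Q.y f) = s(Q.v f, Q.x f) := by
  rw [oppEdge, if_neg (Q.sAB f).symm, if_neg (Q.sBC f), if_pos rfl]

lemma oppEdge_D (f : F) : Q.oppEdge f s(Q.v f, Q.x f) = s(Q.u f, Q.y f) := by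
  rw [oppEdge, if_neg (Q.sAD f).symm, if_neg (Q.sCD f).symm, if_neg (Q.sBD f).symm]

lemma oppEdge_cases {f : F} {e : Sym2 V} (he : e ∈ Q.sides f) :
    (e = s(Q.x f, Q.u f) ∧ Q.oppEdge f e = s(Q.y f, Q.v f)) ∨
    (e = s(Q.y f, Q.v f) ∧ Q.oppEdge f e = s(Q.x f, Q.u f)) ∨
    (e = s(Q.u f, Q.y f) ∧ Q.oppEdge f e = s(Q.v f, Q.x f)) ∨
    (e = s(Q.v f, Q.x f) ∧ Q.oppEdge f e = s(Q.u f, Q.y f)) := by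
  rw [Q.mem_sides_iff] at he
  rcases he with h | h | h | h <;> subst h
  · exact Or.inl ⟨rfl, Q.oppEdge_A f⟩
  · exact Or.inr (Or.inr (Or.inl ⟨rfl, Q.oppEdge_B f⟩))
  · exact Or.inr (Or.inl ⟨rfl, Q.oppEdge_C f⟩)
  · exact Or.inr (Or.inr (Or.inr ⟨rfl, Q.oppEdge_D f⟩))

lemma oppEdge_mem {f : F} {e : Sym2 V} (he : e ∈ Q.sides f) :
    Q.oppEdge f e ∈ Q.sides f := by
  rcases Q.oppEdge_cases he with ⟨_, h⟩ | ⟨_, h⟩ | ⟨_, h⟩ | ⟨_, h⟩ <;>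
    rw [h, mem_sides_iff] <;> tauto

lemma oppEdge_ne {f : F} {e : Sym2 V} (he : e ∈ Q.sides f) :
    Q.oppEdge f e ≠ e := by
  rcases Q.oppEdge_cases he with ⟨h0, h⟩ | ⟨h0, h⟩ | ⟨h0, h⟩ | ⟨h0, h⟩ <;> rw [h, h0]
  · exact (Q.sAC f).symm
  · exact Q.sAC f
  · exact (Q.sBD f).symm
  · exact Q.sBD f

lemma oppEdge_invol {f : F} {e : Sym2 V} (he : e ∈ Q.sides f) :
    Q.oppEdge f (Q.oppEdge f e) = e := by
  rcases Q.oppEdge_cases he with ⟨h0, h⟩ | ⟨h0, h⟩ | ⟨h0, h⟩ | ⟨h0, h⟩ <;> rw [h, h0]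
  · exact Q.oppEdge_C f
  · exact Q.oppEdge_A f
  · exact Q.oppEdge_D f
  · exact Q.oppEdge_B f

lemma opp_iff {e e' : Sym2 V} :
    Q.Opp e e' ↔ ∃ f, e ∈ Q.sides f ∧ e' = Q.oppEdge f e := by
  constructor
  · rintro ⟨f, ⟨h1, h2⟩ | ⟨h1, h2⟩ | ⟨h1, h2⟩ | ⟨h1, h2⟩⟩ <;> subst h1 <;> subst h2 <;>
      refine ⟨f, ?_, ?_⟩ <;>
      simp only [mem_sides_iff, oppEdge_A, oppEdge_B, oppEdge_C, oppEdge_D] <;> tauto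
  · rintro ⟨f, hm, rfl⟩
    rcases Q.oppEdge_cases hm with ⟨h0, h⟩ | ⟨h0, h⟩ | ⟨h0, h⟩ | ⟨h0, h⟩ <;>
      exact ⟨f, by tauto⟩

lemma opp_symm {e e' : Sym2 V} (h : Q.Opp e e') : Q.Opp e' e := by
  obtain ⟨f, hd⟩ := h; exact ⟨f, by tauto⟩

lemma sides_subset_edgeSet (f : F) : Q.sides f ⊆ Q.edgeSet := fun e he =>
  Finset.mem_biUnion.2 ⟨f, Finset.mem_univ f, he⟩

lemma faceCount_pos {e : Sym2 V} (he : e ∈ Q.edgeSet) : 1 ≤ Q.faceCount e := by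
  obtain ⟨f, _, hf⟩ := Finset.mem_biUnion.1 he
  exact Finset.card_pos.2 ⟨f, Finset.mem_filter.2 ⟨Finset.mem_univ f, hf⟩⟩

end QuadData
namespace QuadData

variable {V F : Type*} [Fintype V] [DecidableEq V] [Fintype F] [DecidableEq F]
variable (Q : QuadData V F)

/-- The faces containing an edge. -/
def facesOf (e : Sym2 V) : Finset F := Finset.univ.filter (fun f => e ∈ Q.sides f)

lemma faceCount_eq (e : Sym2 V) : Q.faceCount e = (Q.facesOf e).card := rfl

lemma mem_facesOf {e : Sym2 V} {f : F} : f ∈ Q.facesOf e ↔ e ∈ Q.sides f := by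
  simp [facesOf]

/-- The other face containing an edge, if any. -/
noncomputable def otherFace (e : Sym2 V) (f : F) : F :=
  if h : ∃ f', (Q.facesOf e).erase f = {f'} then h.choose else f

lemma facesOf_singleton {e : Sym2 V} {f : F} (hf : e ∈ Q.sides f)
    (h1 : Q.faceCount e = 1) : Q.facesOf e = {f} := by
  apply Finset.eq_singleton_iff_unique_mem.2
  refine ⟨Q.mem_facesOf.2 hf, fun g hg => ?_⟩
  exact Finset.card_le_one.1 (le_of_eq h1) g hg f (Q.mem_facesOf.2 hf)

lemma erase_facesOf_eq (hP : Q.IsProper) {e : Sym2 V} {f f' : F}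
    (hf : e ∈ Q.sides f) (hf' : e ∈ Q.sides f') (hne : f' ≠ f) :
    (Q.facesOf e).erase f = {f'} := by
  have hcard : (Q.facesOf e).card ≤ 2 := by
    rw [← faceCount_eq]; exact hP.edge_le_two e (Q.sides_subset_edgeSet f hf)
  have hmem : f' ∈ (Q.facesOf e).erase f :=
    Finset.mem_erase.2 ⟨hne, Q.mem_facesOf.2 hf'⟩
  apply Finset.eq_singleton_iff_unique_mem.2
  refine ⟨hmem, fun g hg => ?_⟩
  have : ((Q.facesOf e).erase f).card ≤ 1 := by
    have := Finset.card_erase_of_mem (Q.mem_facesOf.2 hf)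
    omega
  exact Finset.card_le_one.1 this g hg f' hmem

lemma otherFace_eq (hP : Q.IsProper) {e : Sym2 V} {f f' : F}
    (hf : e ∈ Q.sides f) (hf' : e ∈ Q.sides f') (hne : f' ≠ f) :
    Q.otherFace e f = f' := by
  have hs := Q.erase_facesOf_eq hP hf hf' hne
  have hex : ∃ g, (Q.facesOf e).erase f = {g} := ⟨f', hs⟩
  rw [otherFace, dif_pos hex]
  exact Finset.singleton_inj.1 (hex.choose_spec.symm.trans hs)

lemma otherFace_eq_self (hP : Q.IsProper) {e : Sym2 V} {f : F}
    (hf : e ∈ Q.sides f) (h1 : Q.faceCount e = 1) : Q.otherFace e f = f := by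
  rw [otherFace, dif_neg]
  rintro ⟨f', hs⟩
  rw [Q.facesOf_singleton hf h1, Finset.erase_singleton] at hs
  exact Finset.singleton_ne_empty f' hs.symm

lemma otherFace_mem {e : Sym2 V} {f : F} (hf : e ∈ Q.sides f) :
    e ∈ Q.sides (Q.otherFace e f) := by
  rw [otherFace]
  split
  · next h =>
    have hsub : ({h.choose} : Finset F) ⊆ (Q.facesOf e).erase f := le_of_eq h.choose_spec.symm
    exact Q.mem_facesOf.1 (Finset.mem_erase.1 (hsub (Finset.mem_singleton_self _))).2
  · exact hf

lemma otherFace_cases (hP : Q.IsProper) {e : Sym2 V} {f : F} (hf : e ∈ Q.sides f) :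
    (Q.faceCount e = 1 ∧ Q.otherFace e f = f) ∨
    (Q.faceCount e = 2 ∧ Q.otherFace e f ≠ f) := by
  have hle : Q.faceCount e ≤ 2 := hP.edge_le_two e (Q.sides_subset_edgeSet f hf)
  have hge : 1 ≤ Q.faceCount e := Q.faceCount_pos (Q.sides_subset_edgeSet f hf)
  by_cases h1 : Q.faceCount e = 1
  · exact Or.inl ⟨h1, Q.otherFace_eq_self hP hf h1⟩
  · have h2 : Q.faceCount e = 2 := by omega
    have hlt : 1 < (Q.facesOf e).card := by rw [← faceCount_eq, h2]; omega
    obtain ⟨f', hf'm, hf'ne⟩ := Finset.exists_mem_ne hlt f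
    have hf's : e ∈ Q.sides f' := Q.mem_facesOf.1 hf'm
    refine Or.inr ⟨h2, ?_⟩
    rw [Q.otherFace_eq hP hf hf's hf'ne]; exact hf'ne

lemma otherFace_invol (hP : Q.IsProper) {e : Sym2 V} {f : F} (hf : e ∈ Q.sides f) :
    Q.otherFace e (Q.otherFace e f) = f := by
  rcases Q.otherFace_cases hP hf with ⟨h1, hof⟩ | ⟨h2, hof⟩
  · rw [hof, hof]
  · exact Q.otherFace_eq hP (Q.otherFace_mem hf) hf (fun h => hof h.symm) |>.trans rfl

/-- Flags: incident (edge, face) pairs. -/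
abbrev Flag := {p : Sym2 V × F // p.1 ∈ Q.sides p.2}

/-- Reflection across a face: replace the edge by the opposite edge. -/
def flipFlag (φ : Q.Flag) : Q.Flag :=
  ⟨(Q.oppEdge φ.1.2 φ.1.1, φ.1.2), Q.oppEdge_mem φ.2⟩

lemma flipFlag_invol : Function.Involutive Q.flipFlag := fun φ =>
  Subtype.ext (Prod.ext (Q.oppEdge_invol φ.2) rfl)

lemma flipFlag_ne (φ : Q.Flag) : Q.flipFlag φ ≠ φ := fun h =>
  Q.oppEdge_ne φ.2 (congrArg (fun ψ : Q.Flag => ψ.1.1) h)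

/-- Reflection across an edge: replace the face by the other face. -/
noncomputable def crossFlag (φ : Q.Flag) : Q.Flag :=
  ⟨(φ.1.1, Q.otherFace φ.1.1 φ.1.2), Q.otherFace_mem φ.2⟩

lemma crossFlag_invol (hP : Q.IsProper) : Function.Involutive (Q.crossFlag) := fun φ =>
  Subtype.ext (Prod.ext rfl (Q.otherFace_invol hP φ.2))

/-- The flip permutation. -/
def flipPerm : Equiv.Perm Q.Flag := Q.flipFlag_invol.toPerm

/-- The cross permutation. -/
noncomputable def crossPerm (hP : Q.IsProper) : Equiv.Perm Q.Flag :=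
  (Q.crossFlag_invol hP).toPerm

/-- The step permutation of train-track walks. -/
noncomputable def stepPerm (hP : Q.IsProper) : Equiv.Perm Q.Flag :=
  (Q.crossPerm hP).trans Q.flipPerm

lemma stepPerm_apply (hP : Q.IsProper) (φ : Q.Flag) :
    Q.stepPerm hP φ = Q.flipFlag (Q.crossFlag φ) := rfl

lemma flipPerm_apply (φ : Q.Flag) : Q.flipPerm φ = Q.flipFlag φ := rfl

lemma crossPerm_apply (hP : Q.IsProper) (φ : Q.Flag) :
    Q.crossPerm hP φ = Q.crossFlag φ := rfl

lemma flipPerm_inv : (Q.flipPerm)⁻¹ = Q.flipPerm := by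
  rw [Equiv.Perm.inv_def, flipPerm, Function.Involutive.toPerm_symm]

lemma conj_stepPerm (hP : Q.IsProper) :
    Q.flipPerm * Q.stepPerm hP * Q.flipPerm = (Q.stepPerm hP)⁻¹ := by
  apply Equiv.ext; intro φ
  have hL : (Q.flipPerm * Q.stepPerm hP * Q.flipPerm) φ
      = Q.flipFlag (Q.flipFlag (Q.crossFlag (Q.flipFlag φ))) := rfl
  have hR : (Q.stepPerm hP)⁻¹ φ = Q.crossFlag (Q.flipFlag φ) := by
    rw [Equiv.Perm.inv_def, stepPerm, Equiv.symm_trans_apply, flipPerm,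
      Function.Involutive.toPerm_symm, crossPerm, Function.Involutive.toPerm_symm]
    rfl
  rw [hL, hR, Q.flipFlag_invol _]

lemma conj_stepPerm_zpow (hP : Q.IsProper) (k : ℤ) :
    Q.flipPerm * (Q.stepPerm hP) ^ k * Q.flipPerm = (Q.stepPerm hP) ^ (-k) := by
  have h1 : Q.flipPerm * (Q.stepPerm hP) ^ k * Q.flipPerm
      = (Q.flipPerm * Q.stepPerm hP * Q.flipPerm⁻¹) ^ k := by
    rw [conj_zpow, flipPerm_inv]
  rw [h1, flipPerm_inv, conj_stepPerm, inv_zpow, zpow_neg]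

end QuadData
namespace QuadData

variable {V F : Type*} [Fintype V] [DecidableEq V] [Fintype F] [DecidableEq F]
variable (Q : QuadData V F)

/-- The edge of a flag, as an element of the edge set. -/
def edgeOf (ψ : Q.Flag) : {e : Sym2 V // e ∈ Q.edgeSet} :=
  ⟨ψ.1.1, Q.sides_subset_edgeSet _ ψ.2⟩

lemma crossFlag_eq_self (hP : Q.IsProper) {ψ : Q.Flag} :
    Q.crossFlag ψ = ψ ↔ Q.faceCount ψ.1.1 = 1 := by
  constructor
  · intro h
    have h2 : Q.otherFace ψ.1.1 ψ.1.2 = ψ.1.2 := congrArg (fun χ : Q.Flag => χ.1.2) h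
    rcases Q.otherFace_cases hP ψ.2 with ⟨h1, _⟩ | ⟨_, hne⟩
    · exact h1
    · exact absurd h2 hne
  · intro h
    exact Subtype.ext (Prod.ext rfl (Q.otherFace_eq_self hP ψ.2 h))

lemma crossFlag_eq_flip_step (hP : Q.IsProper) (ψ : Q.Flag) :
    Q.crossFlag ψ = Q.flipFlag (Q.stepPerm hP ψ) := by
  rw [stepPerm_apply, Q.flipFlag_invol]

lemma opp_edge_step (hP : Q.IsProper) (ψ : Q.Flag) :
    Q.Opp ψ.1.1 ((Q.stepPerm hP ψ)).1.1 :=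
  (Q.opp_iff).2 ⟨(Q.crossFlag ψ).1.2, (Q.crossFlag ψ).2, rfl⟩

/-- The main orbit analysis: each train track containing a boundary edge contains
exactly two boundary edges. -/
lemma fiber_eq (hP : Q.IsProper) (b : {e : Sym2 V // e ∈ Q.edgeSet})
    (hb : Q.faceCount b.1 = 1) :
    ∃ b2, b2 ≠ b ∧ Q.faceCount b2.1 = 1 ∧ Q.trackSetoid.r b b2 ∧
      ∀ x, Q.faceCount x.1 = 1 → Q.trackSetoid.r b x → x = b ∨ x = b2 := by
  classical
  set G := Q.stepPerm hP with hGdef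
  -- the starting boundary flag
  obtain ⟨f0, hf0m⟩ := Finset.card_pos.1 (by rw [← faceCount_eq]; omega :
    0 < (Q.facesOf b.1).card)
  have hf0 : b.1 ∈ Q.sides f0 := Q.mem_facesOf.1 hf0m
  set φ0 : Q.Flag := ⟨(b.1, f0), hf0⟩ with hφ0def
  have hfix : Q.crossFlag φ0 = φ0 := (Q.crossFlag_eq_self hP).2 hb
  have hαφ0 : Q.flipFlag φ0 = G φ0 := by
    rw [hGdef, stepPerm_apply, hfix]
  -- conjugation
  have hconj : ∀ (k : ℕ) (χ : Q.Flag), Q.flipFlag ((G^k) (Q.flipFlag χ)) = (G^k)⁻¹ χ := by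
    intro k χ
    have h := congrArg (fun σ : Equiv.Perm Q.Flag => σ χ) (Q.conj_stepPerm_zpow hP k)
    simp only [zpow_natCast, zpow_neg, Equiv.Perm.mul_apply] at h
    exact h
  have hα : ∀ k : ℕ, Q.flipFlag ((G^k) φ0) = (G^k)⁻¹ (G φ0) := by
    intro k
    have h0 : φ0 = Q.flipFlag (G φ0) := by rw [← hαφ0, Q.flipFlag_invol]
    conv_lhs => rw [h0]
    exact hconj k (G φ0)
  -- the period
  have hex : ∃ n, 0 < n ∧ (G^n) φ0 = φ0 :=
    ⟨orderOf G, orderOf_pos G, by rw [pow_orderOf_eq_one]; rfl⟩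
  set n := Nat.find hex with hndef
  obtain ⟨hn_pos, hn_fix⟩ := Nat.find_spec hex
  have hn_min : ∀ j, j < n → ¬(0 < j ∧ (G^j) φ0 = φ0) := fun j hj => Nat.find_min hex hj
  have hmod : ∀ a c : ℕ, (G^(a + n*c)) φ0 = (G^a) φ0 := by
    intro a c
    induction c with
    | zero => simp
    | succ c ih =>
      have : a + n*(c+1) = (a + n*c) + n := by ring
      rw [this, pow_add, Equiv.Perm.mul_apply, hn_fix, ih]
  have hdvd : ∀ m : ℕ, (G^m) φ0 = φ0 ↔ n ∣ m := by
    intro m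
    constructor
    · intro h
      have hm : m = m % n + n * (m / n) := by
        rw [Nat.mod_add_div]
      rw [hm, hmod] at h
      rcases Nat.eq_zero_or_pos (m % n) with h0 | h0
      · exact Nat.dvd_of_mod_eq_zero h0
      · exact absurd ⟨h0, h⟩ (hn_min _ (Nat.mod_lt m hn_pos))
    · rintro ⟨c, rfl⟩
      have : n * c = 0 + n * c := by ring
      rw [this, hmod]; rfl
  -- positive-power form of the flip on the orbit
  have hαpow : ∀ j : ℕ, (G^(1 + n*(j+1) - j)) φ0 = Q.flipFlag ((G^j) φ0) := by
    intro j
    have hjle : j ≤ 1 + n*(j+1) := by nlinarith [hn_pos]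
    have hsum : j + (1 + n*(j+1) - j) = 1 + n*(j+1) := by omega
    have happ : (G^j) ((G^(1 + n*(j+1) - j)) φ0) = G φ0 := by
      rw [← Equiv.Perm.mul_apply, ← pow_add, hsum, hmod]
      rw [pow_one]
    rw [hα j]
    exact (Equiv.eq_symm_apply (G^j)).2 happ
  have hβpow : ∀ j : ℕ, ∃ i : ℕ, (G^i) φ0 = Q.crossFlag ((G^j) φ0) := by
    intro j
    refine ⟨1 + n*(j+2) - (j+1), ?_⟩
    rw [Q.crossFlag_eq_flip_step hP, ← hGdef]
    have : G ((G^j) φ0) = (G^(j+1)) φ0 := by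
      rw [pow_succ', Equiv.Perm.mul_apply]
    rw [this]
    exact hαpow (j+1)
  -- boundary flags in the orbit
  have hbd : ∀ k : ℕ, Q.crossFlag ((G^k) φ0) = (G^k) φ0 ↔ n ∣ 2*k := by
    intro k
    have hstep1 : Q.crossFlag ((G^k) φ0) = Q.flipFlag ((G^(k+1)) φ0) := by
      rw [Q.crossFlag_eq_flip_step hP, ← hGdef]
      congr 1
      rw [pow_succ', Equiv.Perm.mul_apply]
    rw [hstep1, hα (k+1)]
    rw [Equiv.Perm.inv_def, Equiv.symm_apply_eq]
    have h1 : (G^(k+1)) ((G^k) φ0) = G ((G^(2*k)) φ0) := by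
      rw [← Equiv.Perm.mul_apply, ← pow_add]
      have : k + 1 + k = 2*k + 1 := by ring
      rw [this, pow_succ', Equiv.Perm.mul_apply]
    rw [h1]
    constructor
    · intro h
      exact (hdvd _).1 (G.injective h.symm)
    · intro h
      rw [(hdvd _).2 h]
  -- n is even
  have hparity : ∀ k : ℕ, 1 ≤ k → ¬ (n ∣ 2*k - 1) := by
    intro k hk hdv
    have hne := Q.flipFlag_ne ((G^k) φ0)
    apply hne
    rw [hα k, Equiv.Perm.inv_def, Equiv.symm_apply_eq]
    have h1 : (G^k) ((G^k) φ0) = G ((G^(2*k-1)) φ0) := by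
      rw [← Equiv.Perm.mul_apply, ← pow_add]
      have : k + k = (2*k - 1) + 1 := by omega
      rw [this, pow_succ', Equiv.Perm.mul_apply]
    rw [h1, (hdvd _).2 hdv]
  have hneven : ∃ m, 1 ≤ m ∧ n = 2*m := by
    rcases Nat.even_or_odd n with he | ho
    · obtain ⟨m, hm⟩ := he
      exact ⟨m, by omega, by omega⟩
    · exfalso
      obtain ⟨m, hm⟩ := ho
      exact hparity (m+1) (by omega) ⟨1, by omega⟩
  obtain ⟨m, hm1, hm2⟩ := hneven
  -- the midpoint flag
  set ψm : Q.Flag := (G^m) φ0 with hψm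
  have hψm_fix : Q.crossFlag ψm = ψm := (hbd m).2 ⟨1, by omega⟩
  have hψm_bd : Q.faceCount ψm.1.1 = 1 := (Q.crossFlag_eq_self hP).1 hψm_fix
  have hψm_ne : ψm ≠ φ0 := by
    intro h
    have := (hdvd m).1 h
    have := Nat.le_of_dvd (by omega) this
    omega
  refine ⟨Q.edgeOf ψm, ?_, hψm_bd, ?_, ?_⟩
  · -- b2 ≠ b
    intro h
    apply hψm_ne
    have hedge : ψm.1.1 = b.1 := congrArg Subtype.val h
    have hfm : ψm.1.2 ∈ Q.facesOf b.1 := Q.mem_facesOf.2 (hedge ▸ ψm.2)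
    rw [Q.facesOf_singleton hf0 hb, Finset.mem_singleton] at hfm
    exact Subtype.ext (Prod.ext hedge hfm)
  · -- b and b2 are track-related
    have hchain : ∀ k : ℕ, Q.trackSetoid.r b (Q.edgeOf ((G^k) φ0)) := by
      intro k
      induction k with
      | zero =>
        have : Q.edgeOf ((G^0) φ0) = b := Subtype.ext rfl
        rw [this]
      | succ k ih =>
        refine Relation.EqvGen.trans _ _ _ ih ?_
        have hstep := Q.opp_edge_step hP ((G^k) φ0)
        have heq : (G^(k+1)) φ0 = Q.stepPerm hP ((G^k) φ0) := by
          rw [pow_succ', Equiv.Perm.mul_apply, hGdef]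
        rw [heq]
        exact Relation.EqvGen.rel _ _ hstep
    exact hchain m
  · -- uniqueness
    intro x hx1 hxr
    set S : Set {e : Sym2 V // e ∈ Q.edgeSet} :=
      {x | ∃ k : ℕ, Q.edgeOf ((G^k) φ0) = x} with hSdef
    have hb_mem : b ∈ S := ⟨0, Subtype.ext rfl⟩
    have hcl : ∀ a c : {e : Sym2 V // e ∈ Q.edgeSet}, Q.Opp a.1 c.1 → a ∈ S → c ∈ S := by
      rintro a c hopp ⟨k, hk⟩
      obtain ⟨f, haf, hcf⟩ := (Q.opp_iff).1 hopp
      have hedge : ((G^k) φ0).1.1 = a.1 := congrArg Subtype.val hk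
      have haf' : ((G^k) φ0).1.1 ∈ Q.sides f := by rw [hedge]; exact haf
      -- the flag (a.1, f) is in the orbit
      have hχ : ∃ j : ℕ, (G^j) φ0 = (⟨(((G^k) φ0).1.1, f), haf'⟩ : Q.Flag) := by
        by_cases hff : f = ((G^k) φ0).1.2
        · exact ⟨k, Subtype.ext (Prod.ext rfl hff.symm)⟩
        · obtain ⟨i, hi⟩ := hβpow k
          refine ⟨i, ?_⟩
          rw [hi]
          apply Subtype.ext
          show (((G^k) φ0).1.1, Q.otherFace ((G^k) φ0).1.1 ((G^k) φ0).1.2)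
            = (((G^k) φ0).1.1, f)
          rw [Q.otherFace_eq hP ((G^k) φ0).2 haf' hff]
      obtain ⟨j, hj⟩ := hχ
      refine ⟨1 + n*(j+1) - j, ?_⟩
      rw [hαpow j, hj]
      apply Subtype.ext
      show Q.oppEdge f ((G^k) φ0).1.1 = c.1
      rw [hedge, ← hcf]
    have hEqv : ∀ a c : {e : Sym2 V // e ∈ Q.edgeSet},
        Relation.EqvGen (fun e e' => Q.Opp e.1 e'.1) a c → (a ∈ S ↔ c ∈ S) := by
      intro a c h
      induction h with
      | rel a c h => exact ⟨hcl a c h, hcl c a (Q.opp_symm h)⟩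
      | refl a => exact Iff.rfl
      | symm a c h ih => exact ih.symm
      | trans a c d h1 h2 ih1 ih2 => exact ih1.trans ih2
    have hxS : x ∈ S := (hEqv b x hxr).1 hb_mem
    obtain ⟨k, hk⟩ := hxS
    -- the flag at k is a boundary flag
    have hkfix : Q.crossFlag ((G^k) φ0) = (G^k) φ0 := by
      apply (Q.crossFlag_eq_self hP).2
      have : ((G^k) φ0).1.1 = x.1 := congrArg Subtype.val hk
      rw [this]; exact hx1
    obtain ⟨c, hc⟩ := (hbd k).1 hkfix
    have h2c : 2*k = 2*(m*c) := by rw [hc, hm2]; ring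
    have hkc : k = m * c := by omega
    have hpar : ∀ c : ℕ, ((G^m)^c) φ0 = φ0 ∨ ((G^m)^c) φ0 = (G^m) φ0 := by
      intro c
      induction c with
      | zero => exact Or.inl rfl
      | succ c ih =>
        rw [pow_succ', Equiv.Perm.mul_apply]
        rcases ih with h | h
        · rw [h]; exact Or.inr rfl
        · rw [h, ← Equiv.Perm.mul_apply, ← pow_add]
          left
          have : m + m = n := by omega
          rw [this, hn_fix]
    have hGk : (G^k) φ0 = ((G^m)^c) φ0 := by rw [hkc, pow_mul]
    rcases hpar c with h | h
    · left
      rw [← hk, hGk, h]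
      exact Subtype.ext rfl
    · right
      rw [← hk, hGk, h]
end QuadData
namespace QuadData

variable {V F : Type*} [Fintype V] [DecidableEq V] [Fintype F] [DecidableEq F]
variable (Q : QuadData V F)

lemma card_sides (f : F) : (Q.sides f).card = 4 := by
  rw [sides]
  rw [Finset.card_insert_of_notMem, Finset.card_insert_of_notMem,
    Finset.card_insert_of_notMem, Finset.card_singleton]
  · simp only [Finset.mem_singleton]; exact Q.sCD f
  · simp only [Finset.mem_insert, Finset.mem_singleton]
    push_neg; exact ⟨Q.sBC f, Q.sBD f⟩
  · simp only [Finset.mem_insert, Finset.mem_singleton]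
    push_neg; exact ⟨Q.sAB f, Q.sAC f, Q.sAD f⟩

lemma sum_faceCount : ∑ e ∈ Q.edgeSet, Q.faceCount e = 4 * Fintype.card F := by
  have h1 : ∀ e, Q.faceCount e = ∑ f : F, if e ∈ Q.sides f then 1 else 0 := by
    intro e; rw [faceCount, Finset.card_filter]
  calc ∑ e ∈ Q.edgeSet, Q.faceCount e
      = ∑ e ∈ Q.edgeSet, ∑ f : F, if e ∈ Q.sides f then 1 else 0 :=
        Finset.sum_congr rfl (fun e _ => h1 e)
    _ = ∑ f : F, ∑ e ∈ Q.edgeSet, if e ∈ Q.sides f then 1 else 0 := Finset.sum_comm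
    _ = ∑ f : F, (Q.edgeSet.filter (fun e => e ∈ Q.sides f)).card :=
        Finset.sum_congr rfl (fun f _ => (Finset.card_filter _ _).symm)
    _ = ∑ f : F, (Q.sides f).card := by
        apply Finset.sum_congr rfl; intro f _
        congr 1
        apply Finset.ext; intro e
        simp only [Finset.mem_filter]
        exact ⟨fun h => h.2, fun h => ⟨Q.sides_subset_edgeSet f h, h⟩⟩
    _ = ∑ _f : F, 4 := Finset.sum_congr rfl (fun f _ => Q.card_sides f)
    _ = 4 * Fintype.card F := by
        rw [Finset.sum_const, Finset.card_univ, smul_eq_mul, mul_comm]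

lemma boundary_count (hP : Q.IsProper) :
    (Q.edgeSet.filter (fun e => Q.faceCount e = 1)).card + 4 * Fintype.card F
      = 2 * Q.edgeSet.card := by
  classical
  have hsplit := Finset.sum_filter_add_sum_filter_not Q.edgeSet
    (fun e => Q.faceCount e = 1) Q.faceCount
  have h1 : ∑ e ∈ Q.edgeSet.filter (fun e => Q.faceCount e = 1), Q.faceCount e
      = (Q.edgeSet.filter (fun e => Q.faceCount e = 1)).card := by
    rw [Finset.card_eq_sum_ones]
    apply Finset.sum_congr rfl
    intro e he
    exact (Finset.mem_filter.1 he).2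
  have h2 : ∑ e ∈ Q.edgeSet.filter (fun e => ¬ Q.faceCount e = 1), Q.faceCount e
      = 2 * (Q.edgeSet.filter (fun e => ¬ Q.faceCount e = 1)).card := by
    rw [Finset.card_eq_sum_ones, Finset.mul_sum]
    apply Finset.sum_congr rfl
    intro e he
    obtain ⟨hee, hne⟩ := Finset.mem_filter.1 he
    have hle := hP.edge_le_two e hee
    have hge := Q.faceCount_pos hee
    omega
  have h3 := Finset.card_filter_add_card_filter_not
    (s := Q.edgeSet) (p := fun e => Q.faceCount e = 1)
  rw [h1, h2] at hsplit
  rw [Q.sum_faceCount] at hsplit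
  omega

lemma two_mul_tracks (hP : Q.IsProper) (hNL : Q.NoLoopTrack) :
    2 * Nat.card Q.Tracks = (Q.edgeSet.filter (fun e => Q.faceCount e = 1)).card := by
  classical
  haveI : Finite Q.Tracks := Quotient.finite _
  haveI : Fintype Q.Tracks := Fintype.ofFinite _
  haveI hdr : ∀ (a b : {e : Sym2 V // e ∈ Q.edgeSet}), Decidable (Q.trackSetoid.r a b) :=
    fun a b => Classical.propDecidable _
  haveI : DecidableEq Q.Tracks := Quotient.decidableEq
  rw [Nat.card_eq_fintype_card]
  set Bd : Finset {e : Sym2 V // e ∈ Q.edgeSet} :=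
    Finset.univ.filter (fun e => Q.faceCount e.1 = 1) with hBd
  have hcard : Bd.card = (Q.edgeSet.filter (fun e => Q.faceCount e = 1)).card := by
    apply Finset.card_bij (fun e _ => e.1)
    · intro e he
      exact Finset.mem_filter.2 ⟨e.2, (Finset.mem_filter.1 he).2⟩
    · intro e1 h1 e2 h2 h
      exact Subtype.ext h
    · intro e he
      obtain ⟨h1, h2⟩ := Finset.mem_filter.1 he
      exact ⟨⟨e, h1⟩, Finset.mem_filter.2 ⟨Finset.mem_univ _, h2⟩, rfl⟩
  rw [← hcard]
  have hfib : Bd.card = ∑ t : Q.Tracks,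
      (Bd.filter (fun e => Quotient.mk Q.trackSetoid e = t)).card := by
    convert Finset.card_eq_sum_card_fiberwise (s := Bd) (f := fun e => (Quotient.mk Q.trackSetoid e : Q.Tracks))
      (t := (Finset.univ : Finset Q.Tracks)) (fun x _ => Finset.mem_univ (α := Q.Tracks) _)
    exact Finset.sum_congr (by ext; simp) (fun t _ => by congr 1; ext; simp)
  rw [hfib]
  have hone : ∀ t : Q.Tracks,
      (Bd.filter (fun e => Quotient.mk Q.trackSetoid e = t)).card = 2 := by
    intro t
    induction t using Quotient.inductionOn with
    | h e0 =>
    obtain ⟨b, hrb, hb⟩ := hNL e0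
    obtain ⟨b2, hne, hb2, hrel, huniq⟩ := Q.fiber_eq hP b hb
    have hmkb : Quotient.mk Q.trackSetoid b = Quotient.mk Q.trackSetoid e0 :=
      Quotient.sound (Q.trackSetoid.symm hrb)
    have hset : Bd.filter (fun e => Quotient.mk Q.trackSetoid e = Quotient.mk Q.trackSetoid e0)
        = {b, b2} := by
      apply Finset.ext
      intro x
      simp only [Finset.mem_filter, Finset.mem_insert, Finset.mem_singleton, hBd,
        Finset.mem_univ, true_and]
      constructor
      · rintro ⟨hx1, hx2⟩
        have hxb : Q.trackSetoid.r b x := by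
          apply Q.trackSetoid.symm
          exact Quotient.exact (hx2.trans hmkb.symm)
        exact huniq x hx1 hxb
      · rintro (rfl | rfl)
        · exact ⟨hb, hmkb⟩
        · refine ⟨hb2, ?_⟩
          rw [← hmkb]
          exact Quotient.sound (Q.trackSetoid.symm hrel)
    trans ({b, b2} : Finset {e : Sym2 V // e ∈ Q.edgeSet}).card
    · convert congrArg Finset.card hset
    rw [Finset.card_insert_of_notMem (by simpa using fun h => hne h.symm),
      Finset.card_singleton]
  rw [Finset.sum_congr rfl (fun t _ => hone t), Finset.sum_const, Finset.card_univ,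
    smul_eq_mul, mul_comm]

end QuadData

/-- For a connected finite planar quadrangulation with boundary none of whose
train tracks is a loop, the number of train tracks satisfies |T| + 1 = |V| - |F|. -/
theorem track_count {V F : Type*} [Fintype V] [DecidableEq V] [Fintype F] [DecidableEq F]
    (Q : QuadData V F) (hP : Q.IsProper) (hNL : Q.NoLoopTrack) :
    (Nat.card Q.Tracks : ℤ) + 1 = (Fintype.card V : ℤ) - (Fintype.card F : ℤ) := by
  classical
  have h1 := Q.two_mul_tracks hP hNL
  have h2 := Q.boundary_count hP
  have h3 := hP.euler
  have h1' : (2:ℤ) * (Nat.card Q.Tracks : ℤ)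
      = ((Q.edgeSet.filter (fun e => Q.faceCount e = 1)).card : ℤ) := by
    exact_mod_cast h1
  have h2' : ((Q.edgeSet.filter (fun e => Q.faceCount e = 1)).card : ℤ)
      + 4 * (Fintype.card F : ℤ) = 2 * (Q.edgeSet.card : ℤ) := by
    exact_mod_cast h2
  linarith
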